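/- Under the penny construction with inequalities (1)–(3) and E₀ < 0, if T ⊊ T′ ⊆ Fin n and every two distinct indices i, j ∈ T′ satisfy dist(x i, x j) ≥ √2·n, then E(T′) < E(T). (The total energy strictly decreases with the cardinality of the independent set that is left.) -/

import Mathlib

/-- The total Buckingham–Coulomb interaction (per direction) between two unit-charge ion
pairs whose planar centres are at distance `r`, one ion of each pair at height `0` and
the other at height `1`. -/
noncomputable def pennyF (A11 B11 C11 A12 B12 C12 r : ℝ) : ℝ :=
  A11 * Real.exp (-(B11 * r)) - C11 / r ^ 6 + 1 / r +
    A12 * Real.exp (-(B12 * Real.sqrt (r ^ 2 + 1))) - C12 / (r ^ 2 + 1) ^ 3 -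
    1 / Real.sqrt (r ^ 2 + 1)

/-- The internal Buckingham–Coulomb energy of a single pair: two opposite unit charges at
distance `1`. -/
noncomputable def pennyE0 (A12 B12 C12 : ℝ) : ℝ := A12 * Real.exp (-B12) - C12 - 1

/-- Position in `ℝ³` of the ion `(i, b)`: the planar point `x i` at height `0` if
`b = false` (positive ion) and at height `1` if `b = true` (negative ion). -/
noncomputable def pennyPos {n : ℕ} (x : Fin n → EuclideanSpace ℝ (Fin 2))
    (q : Fin n × Bool) : EuclideanSpace ℝ (Fin 3) :=
  WithLp.toLp 2 ![x q.1 0, x q.1 1, if q.2 then 1 else 0]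

/-- The Buckingham–Coulomb energy between two distinct ions: same-sign ions use the
parameters `(A11, B11, C11)` and Coulomb term `+1/r`, opposite-sign ions use
`(A12, B12, C12)` and Coulomb term `−1/r`. -/
noncomputable def pennyU (A11 B11 C11 A12 B12 C12 : ℝ) {n : ℕ}
    (x : Fin n → EuclideanSpace ℝ (Fin 2)) (a b : Fin n × Bool) : ℝ :=
  if a.2 = b.2 then
    A11 * Real.exp (-(B11 * dist (pennyPos x a) (pennyPos x b))) -
      C11 / dist (pennyPos x a) (pennyPos x b) ^ 6 +
      1 / dist (pennyPos x a) (pennyPos x b)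
  else
    A12 * Real.exp (-(B12 * dist (pennyPos x a) (pennyPos x b))) -
      C12 / dist (pennyPos x a) (pennyPos x b) ^ 6 -
      1 / dist (pennyPos x a) (pennyPos x b)

/-- The total energy of a set `S` of ions: the sum of pairwise energies over all
unordered pairs of distinct ions in `S` (realised as half the ordered sum). -/
noncomputable def pennyES (A11 B11 C11 A12 B12 C12 : ℝ) {n : ℕ}
    (x : Fin n → EuclideanSpace ℝ (Fin 2)) (S : Finset (Fin n × Bool)) : ℝ :=
  (∑ p ∈ S.offDiag, pennyU A11 B11 C11 A12 B12 C12 x p.1 p.2) / 2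

/-- The total energy of the `2|T|` ions whose indices lie in `T`. -/
noncomputable def pennyET (A11 B11 C11 A12 B12 C12 : ℝ) {n : ℕ}
    (x : Fin n → EuclideanSpace ℝ (Fin 2)) (T : Finset (Fin n)) : ℝ :=
  pennyES A11 B11 C11 A12 B12 C12 x (T ×ˢ (Finset.univ : Finset Bool))

open Finset in
lemma dist_pennyPos {n : ℕ} (x : Fin n → EuclideanSpace ℝ (Fin 2)) (i j : Fin n) (s t : Bool) :
    dist (pennyPos x (i, s)) (pennyPos x (j, t)) =
      Real.sqrt (dist (x i) (x j) ^ 2 +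
        ((if s then (1:ℝ) else 0) - (if t then (1:ℝ) else 0)) ^ 2) := by
  rw [EuclideanSpace.dist_eq, EuclideanSpace.dist_eq (x i) (x j)]
  rw [Fin.sum_univ_three, Fin.sum_univ_two]
  rw [Real.sq_sqrt (by positivity)]
  simp [pennyPos, Real.dist_eq, sq_abs]

lemma dist_pennyPos_same {n : ℕ} (x : Fin n → EuclideanSpace ℝ (Fin 2)) (i j : Fin n) (s : Bool) :
    dist (pennyPos x (i, s)) (pennyPos x (j, s)) = dist (x i) (x j) := by
  rw [dist_pennyPos]
  simp [Real.sqrt_sq dist_nonneg]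

lemma dist_pennyPos_diff {n : ℕ} (x : Fin n → EuclideanSpace ℝ (Fin 2)) (i j : Fin n)
    {s t : Bool} (hst : s ≠ t) :
    dist (pennyPos x (i, s)) (pennyPos x (j, t)) =
      Real.sqrt (dist (x i) (x j) ^ 2 + 1) := by
  rw [dist_pennyPos]
  cases s <;> cases t <;> simp_all

lemma pennyU_diag {n : ℕ} (A11 B11 C11 A12 B12 C12 : ℝ)
    (x : Fin n → EuclideanSpace ℝ (Fin 2)) (i : Fin n) {s t : Bool} (hst : s ≠ t) :
    pennyU A11 B11 C11 A12 B12 C12 x (i, s) (i, t) = pennyE0 A12 B12 C12 := by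
  rw [pennyU, if_neg hst, dist_pennyPos_diff x i i hst]
  simp [pennyE0]

lemma pennyU_same_sign {n : ℕ} (A11 B11 C11 A12 B12 C12 : ℝ)
    (x : Fin n → EuclideanSpace ℝ (Fin 2)) (i j : Fin n) (s : Bool) :
    pennyU A11 B11 C11 A12 B12 C12 x (i, s) (j, s) =
      A11 * Real.exp (-(B11 * dist (x i) (x j))) - C11 / dist (x i) (x j) ^ 6 +
        1 / dist (x i) (x j) := by
  rw [pennyU, if_pos rfl, dist_pennyPos_same]

lemma pennyU_diff_sign {n : ℕ} (A11 B11 C11 A12 B12 C12 : ℝ)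
    (x : Fin n → EuclideanSpace ℝ (Fin 2)) (i j : Fin n) {s t : Bool} (hst : s ≠ t) :
    pennyU A11 B11 C11 A12 B12 C12 x (i, s) (j, t) =
      A12 * Real.exp (-(B12 * Real.sqrt (dist (x i) (x j) ^ 2 + 1))) -
        C12 / (dist (x i) (x j) ^ 2 + 1) ^ 3 - 1 / Real.sqrt (dist (x i) (x j) ^ 2 + 1) := by
  rw [pennyU, if_neg hst, dist_pennyPos_diff x i j hst]
  have h1 : (0:ℝ) ≤ dist (x i) (x j) ^ 2 + 1 := by positivity
  have : Real.sqrt (dist (x i) (x j) ^ 2 + 1) ^ 6 = (dist (x i) (x j) ^ 2 + 1) ^ 3 := by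
    rw [show (6:ℕ) = 2 * 3 from rfl, pow_mul, Real.sq_sqrt h1]
  rw [this]

open Finset in
lemma pennyET_eq {n : ℕ} (A11 B11 C11 A12 B12 C12 : ℝ)
    (x : Fin n → EuclideanSpace ℝ (Fin 2)) (T : Finset (Fin n)) :
    pennyET A11 B11 C11 A12 B12 C12 x T =
      T.card * pennyE0 A12 B12 C12 +
        ∑ p ∈ T.offDiag, pennyF A11 B11 C11 A12 B12 C12 (dist (x p.1) (x p.2)) := by
  classical
  rw [pennyET, pennyES]
  set S := T ×ˢ (Finset.univ : Finset Bool) with hS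
  have hoff : S.offDiag = (S ×ˢ S).filter (fun p => p.1 ≠ p.2) := by
    ext p; simp [Finset.mem_offDiag, Finset.mem_filter, and_assoc]
  rw [hoff, Finset.sum_filter, Finset.sum_product]
  have hstep : ∀ a ∈ S, (∑ b ∈ S, if a ≠ b then pennyU A11 B11 C11 A12 B12 C12 x a b else 0)
      = ∑ j ∈ T, ∑ t : Bool, if a ≠ (j, t) then pennyU A11 B11 C11 A12 B12 C12 x a (j, t) else 0 := by
    intro a _
    rw [hS, Finset.sum_product]
  rw [Finset.sum_congr rfl hstep, hS, Finset.sum_product]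
  have key : ∀ i ∈ T, (∑ s : Bool, ∑ j ∈ T, ∑ t : Bool,
      if (i, s) ≠ (j, t) then pennyU A11 B11 C11 A12 B12 C12 x (i, s) (j, t) else 0)
      = 2 * pennyE0 A12 B12 C12 +
        ∑ j ∈ T, if i ≠ j then 2 * pennyF A11 B11 C11 A12 B12 C12 (dist (x i) (x j)) else 0 := by
    intro i hi
    rw [Finset.sum_comm]
    have inner : ∀ j ∈ T, (∑ s : Bool, ∑ t : Bool,
        if (i, s) ≠ (j, t) then pennyU A11 B11 C11 A12 B12 C12 x (i, s) (j, t) else 0)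
        = (if i = j then 2 * pennyE0 A12 B12 C12 else
            2 * pennyF A11 B11 C11 A12 B12 C12 (dist (x i) (x j))) := by
      intro j _
      by_cases hij : i = j
      · subst hij
        rw [if_pos rfl, Fintype.sum_bool, Fintype.sum_bool, Fintype.sum_bool]
        have e1 := pennyU_diag A11 B11 C11 A12 B12 C12 x i (show true ≠ false by simp)
        have e2 := pennyU_diag A11 B11 C11 A12 B12 C12 x i (show false ≠ true by simp)
        norm_num [e1, e2]
        ring
      · rw [if_neg hij, Fintype.sum_bool, Fintype.sum_bool, Fintype.sum_bool]
        rw [if_pos (by simp [hij]), if_pos (by simp [hij]), if_pos (by simp [hij]),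
          if_pos (by simp [hij])]
        rw [pennyU_same_sign, pennyU_same_sign,
          pennyU_diff_sign A11 B11 C11 A12 B12 C12 x i j (show true ≠ false by simp),
          pennyU_diff_sign A11 B11 C11 A12 B12 C12 x i j (show false ≠ true by simp)]
        rw [pennyF]; ring
    rw [Finset.sum_congr rfl inner]
    have split : ∀ j ∈ T, (if i = j then 2 * pennyE0 A12 B12 C12 else
        2 * pennyF A11 B11 C11 A12 B12 C12 (dist (x i) (x j)))
        = (if i = j then 2 * pennyE0 A12 B12 C12 else 0) +
          (if i ≠ j then 2 * pennyF A11 B11 C11 A12 B12 C12 (dist (x i) (x j)) else 0) := by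
      intro j _; by_cases h : i = j <;> simp [h]
    rw [Finset.sum_congr rfl split, Finset.sum_add_distrib, Finset.sum_ite_eq T i, if_pos hi]
  rw [Finset.sum_congr rfl key, Finset.sum_add_distrib, Finset.sum_const]
  have offT : (∑ p ∈ T.offDiag, pennyF A11 B11 C11 A12 B12 C12 (dist (x p.1) (x p.2)))
      = ∑ i ∈ T, ∑ j ∈ T, if i ≠ j then pennyF A11 B11 C11 A12 B12 C12 (dist (x i) (x j)) else 0 := by
    have : T.offDiag = (T ×ˢ T).filter (fun p => p.1 ≠ p.2) := by
      ext p; simp [Finset.mem_offDiag, Finset.mem_filter, and_assoc]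
    rw [this, Finset.sum_filter, Finset.sum_product]
  rw [offT]
  have half : ∀ i ∈ T, (∑ j ∈ T, if i ≠ j then
      2 * pennyF A11 B11 C11 A12 B12 C12 (dist (x i) (x j)) else 0)
      = 2 * ∑ j ∈ T, if i ≠ j then pennyF A11 B11 C11 A12 B12 C12 (dist (x i) (x j)) else 0 := by
    intro i _
    rw [Finset.mul_sum]
    refine Finset.sum_congr rfl fun j _ => ?_
    by_cases h : i ≠ j <;> simp [h]
  rw [Finset.sum_congr rfl half, ← Finset.mul_sum, nsmul_eq_mul]
  ring
set_option maxHeartbeats 1000000 in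
/-- Under the penny construction with inequalities (1)–(3) and `E₀ < 0`: if `T ⊊ T′` and
`T′` is independent in the tangency graph (all planar distances at least `√2·n`), then
the total energy of the ions indexed by `T′` is strictly smaller than that of the ions
indexed by `T`. -/
theorem penny_energy_decreasing_on_independent {n : ℕ} (hn : 3 ≤ n) (x : Fin n → EuclideanSpace ℝ (Fin 2))
    (hx : ∀ i j : Fin n, i ≠ j →
      dist (x i) (x j) = (n : ℝ) ∨ Real.sqrt 2 * n ≤ dist (x i) (x j))
    (A11 B11 C11 A12 B12 C12 : ℝ)
    (hA11 : 0 ≤ A11) (hB11 : 0 ≤ B11) (hC11 : 0 ≤ C11)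
    (hA12 : 0 ≤ A12) (hB12 : 0 ≤ B12) (hC12 : 0 ≤ C12)
    (hE0 : pennyE0 A12 B12 C12 < 0)
    (h1 : -pennyE0 A12 B12 C12 ≤ pennyF A11 B11 C11 A12 B12 C12 n)
    (h2 : ∀ r : ℝ, Real.sqrt 2 * n ≤ r →
      (n : ℝ) ^ 2 * |pennyF A11 B11 C11 A12 B12 C12 r| ≤ -pennyE0 A12 B12 C12)
    (h3 : ∀ r : ℝ, Real.sqrt 2 * n ≤ r → 0 < pennyF A11 B11 C11 A12 B12 C12 r)
    (T T' : Finset (Fin n)) (hTT : T ⊂ T')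
    (hind : ∀ i ∈ T', ∀ j ∈ T', i ≠ j → Real.sqrt 2 * n ≤ dist (x i) (x j)) :
    pennyET A11 B11 C11 A12 B12 C12 x T' < pennyET A11 B11 C11 A12 B12 C12 x T := by
  classical
  have hE := pennyET_eq A11 B11 C11 A12 B12 C12 x
  rw [hE T, hE T']
  set E0 := pennyE0 A12 B12 C12 with hE0def
  set D := -E0 with hDdef
  have hD : 0 < D := by simp [hDdef]; linarith
  have hn3 : (3:ℝ) ≤ (n:ℝ) := by exact_mod_cast hn
  have hn0 : (0:ℝ) < (n:ℝ)^2 := by positivity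
  have hsub : T.offDiag ⊆ T'.offDiag := by
    intro p hp
    simp only [Finset.mem_offDiag] at hp ⊢
    exact ⟨hTT.1 hp.1, hTT.1 hp.2.1, hp.2.2⟩
  have hsplit := Finset.sum_sdiff (f := fun p => pennyF A11 B11 C11 A12 B12 C12 (dist (x p.1) (x p.2))) hsub
  rw [← hsplit]
  have hbound : ∀ p ∈ T'.offDiag \ T.offDiag, pennyF A11 B11 C11 A12 B12 C12 (dist (x p.1) (x p.2)) ≤ D / (n:ℝ)^2 := by
    intro p hp
    have hp' : p ∈ T'.offDiag := (Finset.mem_sdiff.mp hp).1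
    rw [Finset.mem_offDiag] at hp'
    have hr := hind p.1 hp'.1 p.2 hp'.2.1 hp'.2.2
    have h := h2 _ hr
    rw [le_div_iff₀ hn0]
    calc pennyF A11 B11 C11 A12 B12 C12 (dist (x p.1) (x p.2)) * (n:ℝ)^2
        ≤ |pennyF A11 B11 C11 A12 B12 C12 (dist (x p.1) (x p.2))| * (n:ℝ)^2 :=
          mul_le_mul_of_nonneg_right (le_abs_self _) hn0.le
      _ ≤ D := by rw [mul_comm]; exact h
  have hsum := Finset.sum_le_card_nsmul _ _ _ hbound
  rw [nsmul_eq_mul] at hsum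
  set c := ((T'.offDiag \ T.offDiag).card : ℝ) with hcdef
  have hk : (T.card : ℝ) + 1 ≤ (T'.card : ℝ) := by
    have := Finset.card_lt_card hTT
    exact_mod_cast this
  have hTn : T'.card ≤ n := by
    simpa using Finset.card_le_univ T'
  have hTnR : (T'.card : ℝ) ≤ (n : ℝ) := by exact_mod_cast hTn
  have hm1 : 1 ≤ T'.card := by
    have := Finset.card_lt_card hTT
    omega
  have hcastoff : ((T'.offDiag.card : ℕ) : ℝ) = (T'.card : ℝ) * (T'.card : ℝ) - (T'.card : ℝ) := by
    rw [Finset.offDiag_card, Nat.cast_sub (Nat.le_mul_of_pos_left _ hm1)]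
    push_cast
    ring
  have hcR : c ≤ (n:ℝ) * (n:ℝ) - (n:ℝ) := by
    have h1 : c ≤ ((T'.offDiag.card : ℕ) : ℝ) := by
      rw [hcdef]
      exact_mod_cast Finset.card_le_card (Finset.sdiff_subset)
    rw [hcastoff] at h1
    nlinarith [hk, Nat.cast_nonneg (α := ℝ) T.card]
  have hc0 : (0:ℝ) ≤ c := by positivity
  have hpos : 0 < D / (n:ℝ)^2 := div_pos hD hn0
  have hq : D / (n:ℝ)^2 * (n:ℝ)^2 = D := div_mul_cancel₀ D hn0.ne'
  have hS : (∑ p ∈ T'.offDiag \ T.offDiag, pennyF A11 B11 C11 A12 B12 C12 (dist (x p.1) (x p.2))) < ((T'.card : ℝ) - T.card) * D := by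
    have step1 : c * (D / (n:ℝ)^2) ≤ ((n:ℝ)*(n:ℝ) - (n:ℝ)) * (D / (n:ℝ)^2) :=
      mul_le_mul_of_nonneg_right hcR hpos.le
    have step2 : ((n:ℝ)*(n:ℝ) - (n:ℝ)) * (D / (n:ℝ)^2) < D := by
      nlinarith [mul_pos (show (0:ℝ) < (n:ℝ) by linarith) hpos]
    have step3 : D ≤ ((T'.card : ℝ) - T.card) * D := by
      have h1 : (1:ℝ) ≤ (T'.card : ℝ) - T.card := by linarith
      calc D = 1 * D := (one_mul D).symm
        _ ≤ ((T'.card : ℝ) - T.card) * D := mul_le_mul_of_nonneg_right h1 hD.le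
    linarith
  have hring : ((T'.card : ℝ) - T.card) * D = (T.card : ℝ) * E0 - (T'.card : ℝ) * E0 := by
    rw [hDdef]; ring
  rw [hring] at hS
  linarith
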